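/- Convexity is preserved by the Bellman operator: if V : 𝔅 × [0,1] → ℝ is bounded and for every b ∈ 𝔅 the map p ↦ V(b,p) is convex on [0,1], then for every b ∈ 𝔅 the map p ↦ (𝒯V)(b,p) is convex on [0,1]. -/

import Mathlib

namespace EH

/-- Parameters of the energy-harvesting communication model. -/
structure Params where
  k : ℕ
  Bmax : ℕ
  lam0 : ℝ
  lam1 : ℝ
  q : ℝ
  R : ℝ
  beta : ℝ
  hk : 2 ≤ k
  hBmax : 1 ≤ Bmax
  hlam0 : lam0 ∈ Set.Icc (0:ℝ) 1
  hlam1 : lam1 ∈ Set.Icc (0:ℝ) 1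
  hq : q ∈ Set.Icc (0:ℝ) 1
  hR : 0 < R
  hbeta : beta ∈ Set.Ico (0:ℝ) 1

namespace Params

/-- Sensing cost τ = 1/k. -/
noncomputable def tau (P : Params) : ℝ := 1 / (P.k : ℝ)

/-- Battery state space: the grid {jτ : j = 0,1,…,k·Bmax}. -/
def Batt (P : Params) : Set ℝ :=
  {b : ℝ | ∃ j : ℕ, j ≤ P.k * P.Bmax ∧ b = (j : ℝ) * P.tau}

/-- Belief space [0,1]. -/
def Belief : Set ℝ := Set.Icc (0:ℝ) 1

/-- Belief update map J(p) = λ0(1−p) + λ1 p. -/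
def J (P : Params) (p : ℝ) : ℝ := P.lam0 * (1 - p) + P.lam1 * p

/-- Action value of deferring (D). -/
noncomputable def QD (P : Params) (V : ℝ → ℝ → ℝ) (b p : ℝ) : ℝ :=
  P.beta * (P.q * V (min (b + 1) (P.Bmax : ℝ)) (P.J p) + (1 - P.q) * V b (P.J p))

/-- Action value of sensing and transmitting opportunistically (O). -/
noncomputable def QO (P : Params) (V : ℝ → ℝ → ℝ) (b p : ℝ) : ℝ :=
  if 1 ≤ b then
    p * ((1 - P.tau) * P.R
        + P.beta * (P.q * V b P.lam1 + (1 - P.q) * V (b - 1) P.lam1))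
      + (1 - p) * (P.beta * (P.q * V (min (b - P.tau + 1) (P.Bmax : ℝ)) P.lam0
        + (1 - P.q) * V (b - P.tau) P.lam0))
  else
    P.beta * (P.q * p * V (b - P.tau + 1) P.lam1
      + P.q * (1 - p) * V (b - P.tau + 1) P.lam0
      + (1 - P.q) * p * V (b - P.tau) P.lam1
      + (1 - P.q) * (1 - p) * V (b - P.tau) P.lam0)

/-- Action value of transmitting without sensing (T). -/
noncomputable def QT (P : Params) (V : ℝ → ℝ → ℝ) (b p : ℝ) : ℝ :=
  p * (P.R + P.beta * (P.q * V b P.lam1 + (1 - P.q) * V (b - 1) P.lam1))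
    + (1 - p) * (P.beta * (P.q * V b P.lam0 + (1 - P.q) * V (b - 1) P.lam0))

/-- Bellman operator 𝒯: max over the available actions (D always; O iff b ≥ τ; T iff b ≥ 1). -/
noncomputable def bellman (P : Params) (V : ℝ → ℝ → ℝ) (b p : ℝ) : ℝ :=
  if 1 ≤ b then max (P.QD V b p) (max (P.QO V b p) (P.QT V b p))
  else if P.tau ≤ b then max (P.QD V b p) (P.QO V b p)
  else P.QD V b p

/-- Boundedness of a value function on the state space 𝔅 × [0,1]. -/
def Bdd (P : Params) (V : ℝ → ℝ → ℝ) : Prop :=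
  ∃ M : ℝ, ∀ b ∈ P.Batt, ∀ p ∈ Belief, |V b p| ≤ M

/-- V is a fixed point of the Bellman operator on 𝔅 × [0,1]. -/
def IsFixed (P : Params) (V : ℝ → ℝ → ℝ) : Prop :=
  ∀ b ∈ P.Batt, ∀ p ∈ Belief, P.bellman V b p = V b p

/-- Supremum distance over the state space 𝔅 × [0,1]. -/
noncomputable def supDist (P : Params) (V W : ℝ → ℝ → ℝ) : ℝ :=
  sSup {x : ℝ | ∃ b ∈ P.Batt, ∃ p ∈ Belief, x = |V b p - W b p|}

end Params

open Params


private lemma affine_cvx (A B : ℝ) :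
    ConvexOn ℝ (Set.Icc (0:ℝ) 1) (fun p => A * p + B) := by
  refine ⟨convex_Icc 0 1, ?_⟩
  intro x _ y _ a b ha hb hab
  simp only [smul_eq_mul]
  apply le_of_eq
  linear_combination (-B) * hab

private lemma affine_cvx2 (C D : ℝ) :
    ConvexOn ℝ (Set.Icc (0:ℝ) 1) (fun p => p * C + (1 - p) * D) := by
  have h : (fun p : ℝ => p * C + (1 - p) * D) = fun p => (C - D) * p + D := by
    funext p; ring
  rw [h]; exact affine_cvx _ _

private lemma comp_J_cvx (P : Params) {f : ℝ → ℝ}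
    (hf : ConvexOn ℝ (Set.Icc (0:ℝ) 1) f) :
    ConvexOn ℝ (Set.Icc (0:ℝ) 1) (fun p => f (P.J p)) := by
  have hmem : ∀ p ∈ Set.Icc (0:ℝ) 1, P.J p ∈ Set.Icc (0:ℝ) 1 := by
    intro p hp
    obtain ⟨h0, h1⟩ := hp
    obtain ⟨hl0, hl0'⟩ := P.hlam0
    obtain ⟨hl1, hl1'⟩ := P.hlam1
    constructor <;> simp only [Params.J] <;> nlinarith
  refine ⟨convex_Icc 0 1, ?_⟩
  intro x hx y hy a b ha hb hab
  have hJ : P.J (a • x + b • y) = a • P.J x + b • P.J y := by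
    simp only [smul_eq_mul, Params.J]; linear_combination (-P.lam0) * hab
  simp only [hJ]
  exact hf.2 (hmem x hx) (hmem y hy) ha hb hab

private lemma max_cvx {f g : ℝ → ℝ} (hf : ConvexOn ℝ (Set.Icc (0:ℝ) 1) f)
    (hg : ConvexOn ℝ (Set.Icc (0:ℝ) 1) g) :
    ConvexOn ℝ (Set.Icc (0:ℝ) 1) (fun p => max (f p) (g p)) :=
  hf.sup hg

private lemma min_mem_batt (P : Params) {b : ℝ} (hb : b ∈ P.Batt) :
    min (b + 1) (P.Bmax : ℝ) ∈ P.Batt := by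
  obtain ⟨j, hj, rfl⟩ := hb
  have hk0 : (P.k : ℝ) ≠ 0 := Nat.cast_ne_zero.mpr (by have := P.hk; omega)
  have hτ : 0 < P.tau := by
    have : (0:ℝ) < (P.k : ℝ) := by positivity
    exact div_pos one_pos this
  have hkτ : (P.k : ℝ) * P.tau = 1 := by rw [Params.tau, mul_one_div, div_self hk0]
  refine ⟨min (j + P.k) (P.k * P.Bmax), Nat.min_le_right _ _, ?_⟩
  have e1 : (j:ℝ) * P.tau + 1 = ((j:ℝ) + (P.k:ℝ)) * P.tau := by
    linear_combination -hkτ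
  have e2 : ((P.Bmax:ℕ):ℝ) = ((P.k:ℝ) * (P.Bmax:ℝ)) * P.tau := by
    linear_combination (-(P.Bmax:ℝ)) * hkτ
  rw [e1, e2, ← min_mul_of_nonneg _ _ hτ.le]
  push_cast
  ring_nf

/-- Convexity in the belief is preserved by the Bellman operator. -/
theorem stmt5 (P : Params) (V : ℝ → ℝ → ℝ) (hV : P.Bdd V)
    (hconv : ∀ b ∈ P.Batt, ConvexOn ℝ (Set.Icc (0:ℝ) 1) (fun p => V b p)) :
    ∀ b ∈ P.Batt, ConvexOn ℝ (Set.Icc (0:ℝ) 1) (fun p => P.bellman V b p) := by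
  intro b hb
  have hβ := P.hbeta.1
  have hq0 := P.hq.1
  have hq1 := P.hq.2
  have hc2 := hconv b hb
  have hc1 := hconv _ (min_mem_batt P hb)
  -- QD is convex
  have hQD : ConvexOn ℝ (Set.Icc (0:ℝ) 1) (fun p => P.QD V b p) := by
    have h1 : ConvexOn ℝ (Set.Icc (0:ℝ) 1)
        (fun p => (P.beta * P.q) • V (min (b + 1) (P.Bmax : ℝ)) (P.J p)
          + (P.beta * (1 - P.q)) • V b (P.J p)) :=
      ((comp_J_cvx P hc1).smul (mul_nonneg hβ hq0)).add
        ((comp_J_cvx P hc2).smul (mul_nonneg hβ (by linarith)))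
    have heq : (fun p => P.QD V b p)
        = fun p => (P.beta * P.q) • V (min (b + 1) (P.Bmax : ℝ)) (P.J p)
          + (P.beta * (1 - P.q)) • V b (P.J p) := by
      funext p; simp only [Params.QD, smul_eq_mul]; ring
    rw [heq]; exact h1
  -- QT is convex (affine in p)
  have hQT : ConvexOn ℝ (Set.Icc (0:ℝ) 1) (fun p => P.QT V b p) := by
    have heq : (fun p => P.QT V b p)
        = fun p => p * (P.R + P.beta * (P.q * V b P.lam1 + (1 - P.q) * V (b - 1) P.lam1))
          + (1 - p) * (P.beta * (P.q * V b P.lam0 + (1 - P.q) * V (b - 1) P.lam0)) := by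
      funext p; simp only [Params.QT]
    rw [heq]; exact affine_cvx2 _ _
  -- QO is convex (affine in p), in both branches
  have hQO : ConvexOn ℝ (Set.Icc (0:ℝ) 1) (fun p => P.QO V b p) := by
    by_cases h1b : (1:ℝ) ≤ b
    · have heq : (fun p => P.QO V b p)
          = fun p => p * ((1 - P.tau) * P.R
              + P.beta * (P.q * V b P.lam1 + (1 - P.q) * V (b - 1) P.lam1))
            + (1 - p) * (P.beta * (P.q * V (min (b - P.tau + 1) (P.Bmax : ℝ)) P.lam0
              + (1 - P.q) * V (b - P.tau) P.lam0)) := by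
        funext p; simp only [Params.QO, if_pos h1b]
      rw [heq]; exact affine_cvx2 _ _
    · have heq : (fun p => P.QO V b p)
          = fun p => p * (P.beta * (P.q * V (b - P.tau + 1) P.lam1
              + (1 - P.q) * V (b - P.tau) P.lam1))
            + (1 - p) * (P.beta * (P.q * V (b - P.tau + 1) P.lam0
              + (1 - P.q) * V (b - P.tau) P.lam0)) := by
        funext p; simp only [Params.QO, if_neg h1b]; ring
      rw [heq]; exact affine_cvx2 _ _
  rcases le_or_gt 1 b with h1 | h1
  · simp only [Params.bellman, if_pos h1]
    exact max_cvx hQD (max_cvx hQO hQT)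
  · rcases le_or_gt P.tau b with h2 | h2
    · simp only [Params.bellman, if_neg (not_le.mpr h1), if_pos h2]
      exact max_cvx hQD hQO
    · simp only [Params.bellman, if_neg (not_le.mpr h1), if_neg (not_le.mpr h2)]
      exact hQD

end EH
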